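/- Let f : F → E be nearly continuous with closed graph, where E = E₁ ⊕ L is the topological sum of a space E₁ and a locally compact Hausdorff space L. Then f⁻¹(L) is open in F, F decomposes as the topological sum f⁻¹(E₁) ⊕ f⁻¹(L), and f is continuous at every point of f⁻¹(L). -/

import Mathlib

/-- A map is nearly continuous if preimages of open sets are contained
in the interior of their closures. -/
def NearlyContinuous {F E : Type*} [TopologicalSpace F] [TopologicalSpace E]
    (f : F → E) : Prop :=
  ∀ V : Set E, IsOpen V → f ⁻¹' V ⊆ interior (closure (f ⁻¹' V))

/-- Closed graph implies preimages of compact sets are closed. -/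
lemma closed_preimage_of_compact_of_closed_graph
    {F E : Type*} [TopologicalSpace F] [TopologicalSpace E]
    {f : F → E} (hgraph : IsClosed {q : F × E | q.2 = f q.1})
    {K : Set E} (hK : IsCompact K) : IsClosed (f ⁻¹' K) := by
  rw [← isOpen_compl_iff, isOpen_iff_mem_nhds]
  intro x hx
  have hsub : ({x} : Set F) ×ˢ K ⊆ {q : F × E | q.2 = f q.1}ᶜ := by
    rintro ⟨a, b⟩ ⟨ha, hb⟩
    simp only [Set.mem_singleton_iff] at ha
    subst ha
    intro h
    have h' : b = f a := h
    exact hx (Set.mem_preimage.mpr (h' ▸ hb))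
  obtain ⟨u, v, hu, hv, hxu, hKv, huv⟩ :=
    generalized_tube_lemma isCompact_singleton hK hgraph.isOpen_compl hsub
  refine Filter.mem_of_superset (hu.mem_nhds (hxu rfl)) ?_
  intro a ha hfa
  exact huv (Set.mk_mem_prod ha (hKv hfa)) rfl

theorem closed_graph_into_sum_with_locally_compact
    {F E₁ L : Type*} [TopologicalSpace F] [TopologicalSpace E₁] [TopologicalSpace L]
    [T2Space E₁] [T2Space L] [LocallyCompactSpace L]
    (f : F → E₁ ⊕ L)
    (hnc : NearlyContinuous f)
    (hgraph : IsClosed {q : F × (E₁ ⊕ L) | q.2 = f q.1}) :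
    IsOpen (f ⁻¹' (Set.range Sum.inr)) ∧
      IsOpen (f ⁻¹' (Set.range Sum.inl)) ∧
      ∀ x ∈ f ⁻¹' (Set.range Sum.inr), ContinuousAt f x := by
  -- Key claim: at every point of f⁻¹(range inr), preimages of open nbhds are nbhds.
  have key : ∀ x, f x ∈ Set.range Sum.inr → ∀ V : Set (E₁ ⊕ L), IsOpen V → f x ∈ V →
      f ⁻¹' V ∈ nhds x := by
    intro x hx V hV hfxV
    obtain ⟨y, hy⟩ := hx
    -- open nbhd of y in L
    have hVL : IsOpen (Sum.inr ⁻¹' V : Set L) := hV.preimage continuous_inr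
    have hyVL : y ∈ (Sum.inr ⁻¹' V : Set L) := by simp [hy, hfxV]
    obtain ⟨K, hKc, hyK, hKV⟩ := exists_compact_subset hVL hyVL
    -- U = inr '' interior K is open around f x
    have hUopen : IsOpen (Sum.inr '' interior K : Set (E₁ ⊕ L)) :=
      Topology.IsOpenEmbedding.inr.isOpenMap _ isOpen_interior
    have hfxU : f x ∈ Sum.inr '' interior K := ⟨y, hyK, hy⟩
    have hKclosed : IsClosed (f ⁻¹' (Sum.inr '' K)) :=
      closed_preimage_of_compact_of_closed_graph hgraph (hKc.image continuous_inr)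
    have hsub1 : f ⁻¹' (Sum.inr '' interior K) ⊆ f ⁻¹' (Sum.inr '' K) :=
      Set.preimage_mono (Set.image_mono interior_subset)
    have hcl : closure (f ⁻¹' (Sum.inr '' interior K)) ⊆ f ⁻¹' (Sum.inr '' K) :=
      hKclosed.closure_subset_iff.mpr hsub1
    have hKVsub : f ⁻¹' (Sum.inr '' K) ⊆ f ⁻¹' V := by
      apply Set.preimage_mono
      rintro _ ⟨k, hk, rfl⟩
      exact hKV hk
    have hxint : x ∈ interior (closure (f ⁻¹' (Sum.inr '' interior K))) :=
      hnc _ hUopen hfxU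
    refine Filter.mem_of_superset (isOpen_interior.mem_nhds hxint) ?_
    exact (interior_subset.trans hcl).trans hKVsub
  have hopenR : IsOpen (f ⁻¹' (Set.range Sum.inr)) := by
    rw [isOpen_iff_mem_nhds]
    intro x hx
    exact key x hx _ isOpen_range_inr hx
  have hcompl : f ⁻¹' (Set.range Sum.inl) = (f ⁻¹' (Set.range Sum.inr))ᶜ := by
    ext x
    simp only [Set.mem_preimage, Set.mem_compl_iff]
    cases h : f x with
    | inl a => simp
    | inr b => simp
  have hopenL : IsOpen (f ⁻¹' (Set.range Sum.inl)) := by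
    rw [← subset_interior_iff_isOpen]
    have h1 := hnc _ isOpen_range_inl
    have h2 : closure (f ⁻¹' (Set.range Sum.inl)) ⊆ f ⁻¹' (Set.range Sum.inl) := by
      rw [hcompl]
      exact (hopenR.isClosed_compl).closure_subset_iff.mpr le_rfl
    exact fun x hx => interior_mono h2 (h1 hx)
  refine ⟨hopenR, hopenL, fun x hx => ?_⟩
  intro V hVnhds
  obtain ⟨W, hWsub, hWopen, hfxW⟩ := mem_nhds_iff.mp hVnhds
  exact Filter.mem_of_superset (key x hx W hWopen hfxW) hWsub
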